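/- Let μ be a probability measure on ℝ with continuous strictly increasing CDF F and quantile function Q = F⁻¹. Suppose for some γ > 0 there is c ∈ (0, ∞) with lim_{u→1⁻} Q(u)·(1−u)^γ = c, and let ω > 0. Then there exists z₀ such that ∫_{(z₀,∞)} z^ω dμ(z) < ∞ if and only if ω < 1/γ. -/

import Mathlib

open MeasureTheory Filter Topology Set

/-- Let `μ` be a probability measure on ℝ with continuous strictly
increasing CDF `F` and quantile function `Q = F⁻¹`. If for some `γ > 0` one has
`Q(u)·(1−u)^γ → c ∈ (0,∞)` as `u → 1⁻`, then for any `ω > 0` there exists `z₀` with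
`∫_{(z₀,∞)} z^ω dμ(z) < ∞` iff `ω < 1/γ`. -/
theorem tail_moment_iff_lt_inv_gamma
    (μ : Measure ℝ) [IsProbabilityMeasure μ] (Q : ℝ → ℝ) (γ c ω : ℝ)
    (hF_cont : Continuous fun x => (μ (Set.Iic x)).toReal)
    (hF_mono : StrictMono fun x => (μ (Set.Iic x)).toReal)
    (hQ : ∀ u ∈ Set.Ioo (0:ℝ) 1, (μ (Set.Iic (Q u))).toReal = u)
    (hγ : 0 < γ) (hc : 0 < c) (hω : 0 < ω)
    (hlim : Tendsto (fun u => Q u * (1 - u) ^ γ) (𝓝[<] (1:ℝ)) (𝓝 c)) :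
    (∃ z₀ : ℝ, ∫⁻ z in Set.Ioi z₀, ENNReal.ofReal (z ^ ω) ∂μ < ⊤) ↔ ω < 1 / γ := by
  set F : ℝ → ℝ := fun x => (μ (Set.Iic x)).toReal with hF_def
  -- F takes values in (0,1)
  have hFle : ∀ x, F x ≤ 1 := by
    intro x
    have h1 : μ (Set.Iic x) ≤ 1 := prob_le_one
    have := ENNReal.toReal_mono ENNReal.one_ne_top h1
    simpa using this
  have hF1 : ∀ x, F x < 1 := by
    intro x
    by_contra h
    push_neg at h
    have h2 := hF_mono (lt_add_one x)
    have h3 := hFle (x + 1)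
    simp only [hF_def] at h2 h3 ⊢
    linarith
  have hF0 : ∀ x, 0 < F x := by
    intro x
    by_contra h
    push_neg at h
    have h2 := hF_mono (sub_one_lt x)
    have h3 : (0:ℝ) ≤ F (x - 1) := ENNReal.toReal_nonneg
    simp only [hF_def] at h2 h3
    linarith
  have hQF : ∀ x, Q (F x) = x := fun x =>
    hF_mono.injective (hQ (F x) ⟨hF0 x, hF1 x⟩)
  -- F tends to 1 at +∞
  have hFtend : Tendsto F atTop (𝓝 1) := by
    have h1 := tendsto_measure_Iic_atTop (μ := μ)
    have h2 := (ENNReal.tendsto_toReal (a := μ Set.univ) (by simp)).comp h1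
    simpa [measure_univ, Function.comp_def] using h2
  have hFtend' : Tendsto F atTop (𝓝[<] 1) :=
    tendsto_nhdsWithin_of_tendsto_nhds_of_eventually_within _ hFtend
      (Eventually.of_forall fun x => hF1 x)
  have hT : Tendsto (fun z => z * (1 - F z) ^ γ) atTop (𝓝 c) := by
    have := hlim.comp hFtend'
    simpa only [Function.comp_def, hQF] using this
  -- eventual two-sided bounds
  have hev : ∀ᶠ z in atTop, (z * (1 - F z) ^ γ ∈ Set.Ioo (c / 2) (2 * c)) ∧ 1 ≤ z :=
    (hT.eventually (Ioo_mem_nhds (by linarith) (by linarith))).and (eventually_ge_atTop 1)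
  obtain ⟨z₁, hz₁⟩ := eventually_atTop.1 hev
  have hz₁1 : 1 ≤ z₁ := (hz₁ z₁ le_rfl).2
  set C₁ : ℝ := (c / 2) ^ γ⁻¹ with hC₁def
  set C₂ : ℝ := (2 * c) ^ γ⁻¹ with hC₂def
  have hC₁pos : 0 < C₁ := Real.rpow_pos_of_pos (by linarith) _
  have hC₂pos : 0 < C₂ := Real.rpow_pos_of_pos (by linarith) _
  -- tail bounds for 1 - F
  have hub : ∀ z, z₁ ≤ z → 1 - F z ≤ C₂ * z ^ (-γ⁻¹) := by
    intro z hz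
    have hzpos : (0:ℝ) < z := by linarith
    obtain ⟨⟨h1, h2⟩, -⟩ := hz₁ z hz
    have hs0 : (0:ℝ) ≤ 1 - F z := by linarith [hF1 z]
    have key : (1 - F z) ^ γ ≤ 2 * c / z := by
      rw [le_div_iff₀ hzpos]
      nlinarith
    calc 1 - F z = ((1 - F z) ^ γ) ^ γ⁻¹ := (Real.rpow_rpow_inv hs0 hγ.ne').symm
      _ ≤ (2 * c / z) ^ γ⁻¹ :=
          Real.rpow_le_rpow (Real.rpow_nonneg hs0 γ) key (by positivity)
      _ = C₂ * z ^ (-γ⁻¹) := by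
          rw [Real.div_rpow (by linarith) hzpos.le, Real.rpow_neg hzpos.le, div_eq_mul_inv]
  have hlb : ∀ z, z₁ ≤ z → C₁ * z ^ (-γ⁻¹) ≤ 1 - F z := by
    intro z hz
    have hzpos : (0:ℝ) < z := by linarith
    obtain ⟨⟨h1, h2⟩, -⟩ := hz₁ z hz
    have hs0 : (0:ℝ) ≤ 1 - F z := by linarith [hF1 z]
    have key : c / 2 / z ≤ (1 - F z) ^ γ := by
      rw [div_le_iff₀ hzpos]
      nlinarith
    calc C₁ * z ^ (-γ⁻¹) = (c / 2 / z) ^ γ⁻¹ := by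
          rw [Real.div_rpow (by linarith) hzpos.le, Real.rpow_neg hzpos.le, div_eq_mul_inv]
      _ ≤ ((1 - F z) ^ γ) ^ γ⁻¹ :=
          Real.rpow_le_rpow (by positivity) key (by positivity)
      _ = 1 - F z := Real.rpow_rpow_inv hs0 hγ.ne'
  -- tail measure
  have hμIoi : ∀ x, μ (Set.Ioi x) = ENNReal.ofReal (1 - F x) := by
    intro x
    have hne : μ (Set.Iic x) ≠ ⊤ := measure_ne_top μ _
    rw [← compl_Iic, prob_compl_eq_one_sub measurableSet_Iic,
      ENNReal.ofReal_sub _ ENNReal.toReal_nonneg, ENNReal.ofReal_one,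
      ENNReal.ofReal_toReal hne]
  -- measurability of z ↦ z ^ ω
  have hmeasω : Measurable fun z : ℝ => z ^ ω :=
    (Real.continuous_rpow_const hω.le).measurable
  -- layer cake
  have hLC : ∀ z₀ : ℝ, 1 ≤ z₀ →
      ∫⁻ z in Set.Ioi z₀, ENNReal.ofReal (z ^ ω) ∂μ
        = ∫⁻ t in Set.Ioi (0:ℝ), μ ({a : ℝ | t < a ^ ω} ∩ Set.Ioi z₀) := by
    intro z₀ hz₀
    have hnn : 0 ≤ᵐ[μ.restrict (Set.Ioi z₀)] fun z => z ^ ω := by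
      filter_upwards [ae_restrict_mem measurableSet_Ioi] with z hz
      exact Real.rpow_nonneg (by simp only [Set.mem_Ioi] at hz; linarith) ω
    rw [lintegral_eq_lintegral_meas_lt (μ.restrict (Set.Ioi z₀)) hnn hmeasω.aemeasurable]
    refine lintegral_congr fun t => ?_
    rw [Measure.restrict_apply (measurableSet_lt measurable_const hmeasω)]
  -- set inclusions
  have hsub : ∀ t z₀ : ℝ, 1 ≤ z₀ → 0 < t →
      {a : ℝ | t < a ^ ω} ∩ Set.Ioi z₀ ⊆ Set.Ioi (t ^ ω⁻¹) := by
    rintro t z₀ h1 ht a ⟨ha1, ha2⟩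
    simp only [Set.mem_setOf_eq] at ha1
    simp only [Set.mem_Ioi] at ha2 ⊢
    have ha0 : (0:ℝ) ≤ a := by linarith
    have := Real.rpow_lt_rpow ht.le ha1 (inv_pos.2 hω)
    rwa [Real.rpow_rpow_inv ha0 hω.ne'] at this
  have hsup : ∀ t z₀ : ℝ, 1 ≤ z₀ → z₀ ^ ω ≤ t →
      Set.Ioi (t ^ ω⁻¹) ⊆ {a : ℝ | t < a ^ ω} ∩ Set.Ioi z₀ := by
    intro t z₀ h1 hA a ha
    simp only [Set.mem_Ioi] at ha
    have hz₀pos : (0:ℝ) < z₀ := by linarith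
    have h1t : (1:ℝ) ≤ z₀ ^ ω := by
      have := Real.rpow_le_rpow (by norm_num) h1 hω.le
      simpa using this
    have ht : (0:ℝ) < t := by linarith
    constructor
    · show t < a ^ ω
      have := Real.rpow_lt_rpow (Real.rpow_nonneg ht.le _) ha hω
      rwa [Real.rpow_inv_rpow ht.le hω.ne'] at this
    · show z₀ < a
      have h2 : (z₀ ^ ω) ^ ω⁻¹ ≤ t ^ ω⁻¹ :=
        Real.rpow_le_rpow (by positivity) hA (by positivity)
      rw [Real.rpow_rpow_inv hz₀pos.le hω.ne'] at h2
      linarith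
  -- exponent algebra
  set p : ℝ := (γ * ω)⁻¹ with hpdef
  have hexp : ∀ t : ℝ, 0 < t → (t ^ ω⁻¹) ^ (-γ⁻¹) = t ^ (-p) := by
    intro t ht
    rw [← Real.rpow_mul ht.le]
    congr 1
    rw [hpdef, mul_inv]
    ring
  constructor
  · -- finiteness ⇒ ω < 1/γ
    rintro ⟨z₀, hz₀fin⟩
    by_contra hcon
    push_neg at hcon
    have hp1 : p ≤ 1 := by
      rw [hpdef]
      have h1 : (1:ℝ) ≤ γ * ω := by
        have := mul_le_mul_of_nonneg_left hcon hγ.le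
        rwa [mul_one_div, div_self hγ.ne'] at this
      exact inv_le_one_of_one_le₀ h1
    set z₂ : ℝ := max z₀ z₁ with hz₂def
    have hz₂1 : 1 ≤ z₂ := le_trans hz₁1 (le_max_right _ _)
    have hz₂z₁ : z₁ ≤ z₂ := le_max_right _ _
    have hz₂pos : (0:ℝ) < z₂ := by linarith
    have hfin₂ : ∫⁻ z in Set.Ioi z₂, ENNReal.ofReal (z ^ ω) ∂μ < ⊤ :=
      lt_of_le_of_lt (lintegral_mono_set (Set.Ioi_subset_Ioi (le_max_left _ _))) hz₀fin
    rw [hLC z₂ hz₂1] at hfin₂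
    set A : ℝ := z₂ ^ ω with hAdef
    have hApos : (0:ℝ) < A := Real.rpow_pos_of_pos hz₂pos _
    -- lower bound by an infinite integral
    have hlow : ∫⁻ t in Set.Ioi A, ENNReal.ofReal (C₁ * t ^ (-p))
        ≤ ∫⁻ t in Set.Ioi (0:ℝ), μ ({a : ℝ | t < a ^ ω} ∩ Set.Ioi z₂) := by
      refine le_trans ?_ (lintegral_mono_set (Set.Ioi_subset_Ioi hApos.le))
      refine lintegral_mono_ae ?_
      filter_upwards [ae_restrict_mem measurableSet_Ioi] with t ht
      simp only [Set.mem_Ioi] at ht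
      have htpos : (0:ℝ) < t := lt_trans hApos ht
      have hz₁le : z₁ ≤ t ^ ω⁻¹ := by
        have h2 : (z₂ ^ ω) ^ ω⁻¹ ≤ t ^ ω⁻¹ :=
          Real.rpow_le_rpow (by positivity) ht.le (by positivity)
        rw [Real.rpow_rpow_inv hz₂pos.le hω.ne'] at h2
        linarith
      calc ENNReal.ofReal (C₁ * t ^ (-p))
          = ENNReal.ofReal (C₁ * (t ^ ω⁻¹) ^ (-γ⁻¹)) := by rw [hexp t htpos]
        _ ≤ ENNReal.ofReal (1 - F (t ^ ω⁻¹)) :=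
            ENNReal.ofReal_le_ofReal (hlb _ hz₁le)
        _ = μ (Set.Ioi (t ^ ω⁻¹)) := (hμIoi _).symm
        _ ≤ μ ({a : ℝ | t < a ^ ω} ∩ Set.Ioi z₂) :=
            measure_mono (hsup t z₂ hz₂1 ht.le)
    -- the lower integral is infinite
    have htop : ∫⁻ t in Set.Ioi A, ENNReal.ofReal (C₁ * t ^ (-p)) = ⊤ := by
      by_contra hne
      have hlt : ∫⁻ t in Set.Ioi A, ENNReal.ofReal (C₁ * t ^ (-p)) < ⊤ :=
        lt_top_iff_ne_top.2 hne
      have hnn : 0 ≤ᵐ[volume.restrict (Set.Ioi A)] fun t : ℝ => C₁ * t ^ (-p) := by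
        filter_upwards [ae_restrict_mem measurableSet_Ioi] with t ht
        simp only [Set.mem_Ioi] at ht
        have : (0:ℝ) < t := lt_trans hApos ht
        positivity
      have hfi : HasFiniteIntegral (fun t : ℝ => C₁ * t ^ (-p))
          (volume.restrict (Set.Ioi A)) :=
        (hasFiniteIntegral_iff_ofReal hnn).2 hlt
      have hsm : AEStronglyMeasurable (fun t : ℝ => C₁ * t ^ (-p))
          (volume.restrict (Set.Ioi A)) := by
        refine (ContinuousOn.aestronglyMeasurable ?_ measurableSet_Ioi)
        refine ContinuousOn.mul continuousOn_const ?_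
        intro x hx
        simp only [Set.mem_Ioi] at hx
        exact (Real.continuousAt_rpow_const x (-p)
          (Or.inl (lt_trans hApos hx).ne')).continuousWithinAt
      have hint : IntegrableOn (fun t : ℝ => C₁ * t ^ (-p)) (Set.Ioi A) := ⟨hsm, hfi⟩
      have hint2 : IntegrableOn (fun t : ℝ => t ^ (-p)) (Set.Ioi A) := by
        have := hint.const_mul C₁⁻¹
        simpa [IntegrableOn, inv_mul_cancel_left₀ hC₁pos.ne'] using this
      have := (integrableOn_Ioi_rpow_iff hApos).1 hint2
      linarith
    rw [htop] at hlow
    exact absurd (lt_of_le_of_lt hlow hfin₂) (lt_irrefl ⊤)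
  · -- ω < 1/γ ⇒ finiteness
    intro hωlt
    have hp1 : 1 < p := by
      rw [hpdef]
      refine (one_lt_inv₀ (by positivity)).2 ?_
      have := mul_lt_mul_of_pos_left hωlt hγ
      rwa [mul_one_div, div_self hγ.ne'] at this
    refine ⟨z₁, ?_⟩
    rw [hLC z₁ hz₁1]
    set A : ℝ := z₁ ^ ω with hAdef
    have hz₁pos : (0:ℝ) < z₁ := by linarith
    have hApos : (0:ℝ) < A := Real.rpow_pos_of_pos hz₁pos _
    rw [← Set.Ioc_union_Ioi_eq_Ioi hApos.le,
      lintegral_union measurableSet_Ioi Set.Ioc_disjoint_Ioi_same]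
    refine ENNReal.add_lt_top.2 ⟨?_, ?_⟩
    · -- bounded piece
      calc (∫⁻ t in Set.Ioc (0:ℝ) A, μ ({a : ℝ | t < a ^ ω} ∩ Set.Ioi z₁))
          ≤ ∫⁻ _ in Set.Ioc (0:ℝ) A, (1:ENNReal) := by
            refine lintegral_mono fun t => ?_
            exact le_trans (measure_mono (Set.subset_univ _)) (le_of_eq measure_univ)
        _ = ENNReal.ofReal A := by
            rw [setLIntegral_const, one_mul, Real.volume_Ioc, sub_zero]
        _ < ⊤ := ENNReal.ofReal_lt_top
    · -- tail piece
      have hbound : ∫⁻ t in Set.Ioi A, μ ({a : ℝ | t < a ^ ω} ∩ Set.Ioi z₁)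
          ≤ ∫⁻ t in Set.Ioi A, ENNReal.ofReal (C₂ * t ^ (-p)) := by
        refine lintegral_mono_ae ?_
        filter_upwards [ae_restrict_mem measurableSet_Ioi] with t ht
        simp only [Set.mem_Ioi] at ht
        have htpos : (0:ℝ) < t := lt_trans hApos ht
        have hz₁le : z₁ ≤ t ^ ω⁻¹ := by
          have h2 : (z₁ ^ ω) ^ ω⁻¹ ≤ t ^ ω⁻¹ :=
            Real.rpow_le_rpow (by positivity) ht.le (by positivity)
          rw [Real.rpow_rpow_inv hz₁pos.le hω.ne'] at h2
          linarith
        calc μ ({a : ℝ | t < a ^ ω} ∩ Set.Ioi z₁)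
            ≤ μ (Set.Ioi (t ^ ω⁻¹)) := measure_mono (hsub t z₁ hz₁1 htpos)
          _ = ENNReal.ofReal (1 - F (t ^ ω⁻¹)) := hμIoi _
          _ ≤ ENNReal.ofReal (C₂ * (t ^ ω⁻¹) ^ (-γ⁻¹)) :=
              ENNReal.ofReal_le_ofReal (hub _ hz₁le)
          _ = ENNReal.ofReal (C₂ * t ^ (-p)) := by rw [hexp t htpos]
      refine lt_of_le_of_lt hbound ?_
      have hint : IntegrableOn (fun t : ℝ => C₂ * t ^ (-p)) (Set.Ioi A) :=
        ((integrableOn_Ioi_rpow_iff hApos).2 (by linarith)).const_mul C₂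
      exact hint.lintegral_lt_top
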